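/- Assume A is almost periodic, the family (t_n^{(k)}) is equipotentially almost periodic, and f : ℝ → ℂ^q is bounded, locally integrable and satisfies (H3). Then the sequence h : ℤ → ℂ^q defined by h(n) = ∫_{t_n}^{t_{n+1}} X(t_{n+1}, u) f(u) du is an almost periodic sequence. -/

import Mathlib

open scoped Matrix
open MeasureTheory Filter

attribute [local instance] Matrix.frobeniusSeminormedAddCommGroup
  Matrix.frobeniusNormedAddCommGroup Matrix.frobeniusNormedSpace
  Matrix.frobeniusNormedRing Matrix.frobeniusNormedAlgebra Matrix.frobeniusIsBoundedSMul

noncomputable section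

abbrev Mat (q : ℕ) := Matrix (Fin q) (Fin q) ℂ
abbrev Vec (q : ℕ) := EuclideanSpace ℂ (Fin q)

/-- Action of a `q × q` complex matrix on `ℂ^q` with the Euclidean norm. -/
def aMul {q : ℕ} (M : Mat q) (v : Vec q) : Vec q := Matrix.toEuclideanLin M v

/-- A set of reals is relatively dense. -/
def RelDenseR (E : Set ℝ) : Prop :=
  ∃ l : ℝ, 0 < l ∧ ∀ m : ℝ, (E ∩ Set.Icc m (m + l)).Nonempty

/-- A set of integers is relatively dense in `ℤ`. -/
def RelDenseZ (E : Set ℤ) : Prop :=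
  ∃ l : ℤ, 0 < l ∧ ∀ m : ℤ, (E ∩ Set.Icc m (m + l)).Nonempty

/-- Almost periodic (continuous) function on `ℝ`. -/
def APR {E : Type*} [NormedAddCommGroup E] (g : ℝ → E) : Prop :=
  Continuous g ∧ ∀ ε : ℝ, 0 < ε →
    RelDenseR {τ : ℝ | ∀ t : ℝ, ‖g (t + τ) - g t‖ ≤ ε}

/-- Almost periodic sequence on `ℤ`. -/
def APZ {E : Type*} [NormedAddCommGroup E] (x : ℤ → E) : Prop :=
  ∀ ε : ℝ, 0 < ε → RelDenseZ {τ : ℤ | ∀ n : ℤ, ‖x (n + τ) - x n‖ ≤ ε}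

/-- The family `t_n^{(k)} = t_{n+k} - t_n` is equipotentially almost periodic. -/
def EquiAP (ts : ℤ → ℝ) : Prop :=
  ∀ ε : ℝ, 0 < ε → RelDenseZ {T : ℤ | ∀ k n : ℤ,
    |(ts (T + n + k) - ts (T + n)) - (ts (n + k) - ts n)| ≤ ε}

/-- The `(H3)` translation set of a (possibly discontinuous) function `f`. -/
def Tset {E : Type*} [NormedAddCommGroup E] (ts : ℤ → ℝ) (f : ℝ → E) (ε : ℝ) : Set ℝ :=
  {τ : ℝ | ∀ s : ℝ, (∀ n : ℤ, s ∉ Set.Ioo (ts n - ε) (ts n + ε)) → ‖f (s + τ) - f s‖ ≤ ε}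

/-- Hypothesis `(H3)`: almost periodicity for piecewise continuous functions. -/
def H3cond {E : Type*} [NormedAddCommGroup E] (ts : ℤ → ℝ) (f : ℝ → E) : Prop :=
  ∀ ε : ℝ, 0 < ε → RelDenseR (Tset ts f ε) ∧
    ∃ δ : ℝ, 0 < δ ∧ ∀ τ' : ℝ, |τ'| ≤ δ → ∀ n : ℤ, ∀ s : ℝ,
      s ∈ Set.Icc (ts n) (ts (n + 1)) → s + τ' ∈ Set.Icc (ts n) (ts (n + 1)) →
      ‖f (s + τ') - f s‖ ≤ ε



section AuxKernel
open Real Set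

variable {q : ℕ} {A X : ℝ → Mat q} {M : ℝ}

section Kernel

lemma hasDerivAt_Xinv (hX : ∀ t, HasDerivAt X (A t * X t) t) (hXinv : ∀ t, IsUnit (X t)) (u : ℝ) :
    HasDerivAt (fun s => (X s)⁻¹) (-((X u)⁻¹ * A u)) u := by
  obtain ⟨x, hx⟩ := hXinv u
  have h1 : HasFDerivAt Ring.inverse (-ContinuousLinearMap.mulLeftRight ℂ (Mat q) ↑x⁻¹ ↑x⁻¹)
      (X u) := hx ▸ hasFDerivAt_ringInverse (𝕜 := ℂ) x
  have h2 := (h1.restrictScalars ℝ).comp_hasDerivAt u (hX u)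
  have hxe : (↑x⁻¹ : Mat q) = (X u)⁻¹ := by
    rw [Matrix.nonsing_inv_eq_ringInverse, ← hx, Ring.inverse_unit]
  simp only [ContinuousLinearMap.coe_restrictScalars', ContinuousLinearMap.neg_apply,
    ContinuousLinearMap.mulLeftRight_apply, hxe] at h2
  have h3 : ∀ s, (X s)⁻¹ = Ring.inverse (X s) := fun s => Matrix.nonsing_inv_eq_ringInverse _
  have hinvX : (X u)⁻¹ * X u = 1 :=
    Matrix.nonsing_inv_mul _ ((Matrix.isUnit_iff_isUnit_det _).mp (hXinv u))
  have : (X u)⁻¹ * (A u * X u) * (X u)⁻¹ = (X u)⁻¹ * A u := by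
    have hXinvX : X u * (X u)⁻¹ = 1 :=
      Matrix.mul_nonsing_inv _ ((Matrix.isUnit_iff_isUnit_det _).mp (hXinv u))
    calc (X u)⁻¹ * (A u * X u) * (X u)⁻¹ = (X u)⁻¹ * A u * (X u * (X u)⁻¹) := by
          noncomm_ring
    _ = (X u)⁻¹ * A u := by rw [hXinvX, mul_one]
  rw [this] at h2
  have h4 : (Ring.inverse ∘ X : ℝ → Mat q) = fun s => (X s)⁻¹ := by
    funext s; simp [h3 s, Function.comp]
  rw [h4] at h2
  exact h2

lemma X_mul_inv_self (hXinv : ∀ t, IsUnit (X t)) (a : ℝ) : X a * (X a)⁻¹ = 1 :=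
  Matrix.mul_nonsing_inv _ ((Matrix.isUnit_iff_isUnit_det _).mp (hXinv a))

lemma X_cocycle (hXinv : ∀ t, IsUnit (X t)) (a b c : ℝ) : (X a * (X b)⁻¹) * (X b * (X c)⁻¹) = X a * (X c)⁻¹ := by
  have h := Matrix.nonsing_inv_mul (X b) ((Matrix.isUnit_iff_isUnit_det _).mp (hXinv b))
  calc (X a * (X b)⁻¹) * (X b * (X c)⁻¹) = X a * ((X b)⁻¹ * X b) * (X c)⁻¹ := by
        noncomm_ring
  _ = X a * (X c)⁻¹ := by rw [h, mul_one]

lemma M_nonneg (hM : ∀ t, ‖A t‖ ≤ M) : 0 ≤ M := le_trans (norm_nonneg (A 0)) (hM 0)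

/-- wrapper around mathlib's Gronwall inequality -/
lemma gron {g g' : ℝ → Mat q} {a b δ K c : ℝ} (hab : a ≤ b)
    (hd : ∀ t ∈ Icc a b, HasDerivAt g (g' t) t)
    (ha : ‖g a‖ ≤ δ) (hb : ∀ t ∈ Ico a b, ‖g' t‖ ≤ K * ‖g t‖ + c) :
    ‖g b‖ ≤ gronwallBound δ K c (b - a) := by
  have hc : ContinuousOn g (Icc a b) := fun t ht =>
    ((hd t ht).continuousAt.continuousWithinAt)
  exact norm_le_gronwallBound_of_norm_deriv_right_le hc
    (fun x hx => (hd x (Ico_subset_Icc_self hx)).hasDerivWithinAt) ha hb b ⟨hab, le_rfl⟩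

/-- Gronwall-type bound for the transition kernel. -/
lemma norm_K_le (hX : ∀ t, HasDerivAt X (A t * X t) t) (hXinv : ∀ t, IsUnit (X t))
    (hM : ∀ t, ‖A t‖ ≤ M) (b u : ℝ) :
    ‖X b * (X u)⁻¹‖ ≤ ‖(1 : Mat q)‖ * Real.exp ((M + 1) * |b - u|) := by
  have hM0 : 0 ≤ M := M_nonneg hM
  rcases le_total u b with hub | hbu
  · have h := gron (g := fun w => X w * (X u)⁻¹)
      (g' := fun w => A w * X w * (X u)⁻¹) (δ := ‖(1 : Mat q)‖) (K := M + 1) (c := 0)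
      hub ?_ ?_ ?_
    · rw [abs_of_nonneg (by linarith : (0:ℝ) ≤ b - u)]
      simpa [gronwallBound_ε0] using h
    · intro t _
      exact (hX t).mul_const _
    · show ‖X u * (X u)⁻¹‖ ≤ ‖(1 : Mat q)‖
      rw [X_mul_inv_self hXinv]
    · intro t _
      show ‖A t * X t * (X u)⁻¹‖ ≤ (M + 1) * ‖X t * (X u)⁻¹‖ + 0
      rw [mul_assoc]
      refine le_trans (norm_mul_le _ _) ?_
      have := mul_le_mul_of_nonneg_right (le_trans (hM t) (by linarith : M ≤ M + 1))
        (norm_nonneg (X t * (X u)⁻¹))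
      linarith
  · have h := gron (g := fun w => X (b + u - w) * (X u)⁻¹)
      (g' := fun w => (-1 : ℝ) • (A (b + u - w) * X (b + u - w) * (X u)⁻¹))
      (δ := ‖(1 : Mat q)‖) (K := M + 1) (c := 0) hbu ?_ ?_ ?_
    · simp only [add_sub_cancel_right] at h
      rw [abs_of_nonpos (by linarith : b - u ≤ 0), neg_sub]
      simpa [gronwallBound_ε0] using h
    · intro t _
      have hin : HasDerivAt (fun w : ℝ => b + u - w) (-1) t := by
        simpa using ((hasDerivAt_id t).const_sub (b + u))
      have houter := ((hX (b + u - t)).mul_const ((X u)⁻¹)).scomp t hin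
      exact houter
    · show ‖X (b + u - b) * (X u)⁻¹‖ ≤ ‖(1 : Mat q)‖
      rw [add_sub_cancel_left, X_mul_inv_self hXinv]
    · intro t _
      show ‖(-1 : ℝ) • (A (b + u - t) * X (b + u - t) * (X u)⁻¹)‖ ≤
        (M + 1) * ‖X (b + u - t) * (X u)⁻¹‖ + 0
      rw [norm_smul, mul_assoc]
      have h1 : ‖(-1 : ℝ)‖ = 1 := by simp
      rw [h1, one_mul]
      refine le_trans (norm_mul_le (A (b + u - t)) _) ?_
      have := mul_le_mul_of_nonneg_right (le_trans (hM (b + u - t)) (by linarith : M ≤ M + 1))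
        (norm_nonneg (X (b + u - t) * (X u)⁻¹))
      linarith

lemma continuous_X (hX : ∀ t, HasDerivAt X (A t * X t) t) : Continuous X :=
  continuous_iff_continuousAt.mpr fun t => (hX t).continuousAt

lemma continuous_Xinv (hX : ∀ t, HasDerivAt X (A t * X t) t) (hXinv : ∀ t, IsUnit (X t)) :
    Continuous (fun u => (X u)⁻¹) :=
  continuous_iff_continuousAt.mpr fun t => (hasDerivAt_Xinv hX hXinv t).continuousAt

/-- FTC bound: distance of the kernel from the identity. -/
lemma norm_K_sub_one_le (hX : ∀ t, HasDerivAt X (A t * X t) t) (hXinv : ∀ t, IsUnit (X t))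
    (hM : ∀ t, ‖A t‖ ≤ M) (hAc : Continuous A) (b u : ℝ) :
    ‖X b * (X u)⁻¹ - 1‖ ≤ M * (‖(1 : Mat q)‖ * Real.exp ((M + 1) * |b - u|)) * |b - u| := by
  have hM0 : 0 ≤ M := M_nonneg hM
  have hcont : Continuous fun w => A w * X w * (X u)⁻¹ :=
    (hAc.mul (continuous_X hX)).mul continuous_const
  have hftc : ∫ w in u..b, A w * X w * (X u)⁻¹ = X b * (X u)⁻¹ - X u * (X u)⁻¹ :=
    intervalIntegral.integral_eq_sub_of_hasDerivAt
      (fun t _ => (hX t).mul_const _) (hcont.intervalIntegrable u b)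
  rw [X_mul_inv_self hXinv] at hftc
  rw [← hftc]
  refine intervalIntegral.norm_integral_le_of_norm_le_const
    (C := M * (‖(1 : Mat q)‖ * Real.exp ((M + 1) * |b - u|))) ?_
  intro w hw
  · show ‖A w * X w * (X u)⁻¹‖ ≤ M * (‖(1 : Mat q)‖ * Real.exp ((M + 1) * |b - u|))
    rw [mul_assoc]
    refine le_trans (norm_mul_le _ _) (mul_le_mul (hM w) ?_ (norm_nonneg _) hM0)
    refine le_trans (norm_K_le hX hXinv hM w u) ?_
    have hwu : |w - u| ≤ |b - u| := by
      rcases Set.mem_uIoc.mp hw with ⟨h1, h2⟩ | ⟨h1, h2⟩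
      · rw [abs_of_pos (by linarith : (0:ℝ) < w - u)]
        calc w - u ≤ b - u := by linarith
        _ ≤ |b - u| := le_abs_self _
      · rw [abs_of_nonpos (by linarith : w - u ≤ 0)]
        calc -(w - u) = -(b - u) + (b - w) := by ring
        _ ≤ -(b - u) := by linarith
        _ ≤ |b - u| := neg_le_abs _
    exact mul_le_mul_of_nonneg_left
      (Real.exp_le_exp.mpr (mul_le_mul_of_nonneg_left hwu (by linarith))) (norm_nonneg _)

/-- Comparison of transition kernels under a uniform bound on translates of `A`. -/
lemma K_compare (hX : ∀ t, HasDerivAt X (A t * X t) t) (hXinv : ∀ t, IsUnit (X t))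
    (hM : ∀ t, ‖A t‖ ≤ M) {c₁ c₂ η : ℝ} (hη0 : 0 ≤ η)
    (hη : ∀ w, ‖A (w + c₁) - A (w + c₂)‖ ≤ η) {s t R : ℝ} (hst : s ≤ t) (htR : t - s ≤ R) :
    ‖X (t + c₁) * (X (s + c₁))⁻¹ - X (t + c₂) * (X (s + c₂))⁻¹‖ ≤
      η * (‖(1 : Mat q)‖ * Real.exp ((M + 1) * R)) * Real.exp ((M + 1) * R) := by
  have hM0 : 0 ≤ M := M_nonneg hM
  have hR0 : 0 ≤ R := le_trans (by linarith) htR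
  set B : ℝ := ‖(1 : Mat q)‖ * Real.exp ((M + 1) * R) with hB
  have hB0 : 0 ≤ B := mul_nonneg (norm_nonneg _) (Real.exp_nonneg _)
  have key : ∀ u ∈ Icc 0 (t - s), HasDerivAt
      (fun u => X (t + c₁) * (X (t - u + c₁))⁻¹ - X (t + c₂) * (X (t - u + c₂))⁻¹)
      (X (t + c₁) * ((X (t - u + c₁))⁻¹ * A (t - u + c₁)) -
        X (t + c₂) * ((X (t - u + c₂))⁻¹ * A (t - u + c₂))) u := by
    intro u _
    have hd : ∀ c : ℝ, HasDerivAt (fun u => X (t + c) * (X (t - u + c))⁻¹)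
        (X (t + c) * ((X (t - u + c))⁻¹ * A (t - u + c))) u := by
      intro c
      have hin : HasDerivAt (fun w : ℝ => t - w + c) (-1) u := by
        simpa using (((hasDerivAt_id u).const_sub t).add_const c)
      have hout := (hasDerivAt_Xinv hX hXinv (t - u + c)).scomp u hin
      have h2 := hout.const_mul (X (t + c))
      simp only [neg_smul, one_smul, neg_neg] at h2
      exact h2
    exact (hd c₁).sub (hd c₂)
  have hbound : ∀ u ∈ Ico 0 (t - s),
      ‖X (t + c₁) * ((X (t - u + c₁))⁻¹ * A (t - u + c₁)) -
        X (t + c₂) * ((X (t - u + c₂))⁻¹ * A (t - u + c₂))‖ ≤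
      (M + 1) * ‖X (t + c₁) * (X (t - u + c₁))⁻¹ - X (t + c₂) * (X (t - u + c₂))⁻¹‖ + η * B := by
    intro u hu
    set g : Mat q := X (t + c₁) * (X (t - u + c₁))⁻¹ - X (t + c₂) * (X (t - u + c₂))⁻¹ with hg
    have hid : X (t + c₁) * ((X (t - u + c₁))⁻¹ * A (t - u + c₁)) -
        X (t + c₂) * ((X (t - u + c₂))⁻¹ * A (t - u + c₂)) =
        g * A ((t - u) + c₁) + (X (t + c₂) * (X (t - u + c₂))⁻¹) *
          (A ((t - u) + c₁) - A ((t - u) + c₂)) := by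
      rw [hg]; noncomm_ring
    rw [hid]
    refine le_trans (norm_add_le _ _) ?_
    have h1 : ‖g * A (t - u + c₁)‖ ≤ ‖g‖ * M :=
      le_trans (norm_mul_le _ _) (mul_le_mul_of_nonneg_left (hM _) (norm_nonneg _))
    have h2 : ‖(X (t + c₂) * (X (t - u + c₂))⁻¹) * (A (t - u + c₁) - A (t - u + c₂))‖ ≤ B * η := by
      refine le_trans (norm_mul_le _ _) (mul_le_mul ?_ (hη (t - u)) (norm_nonneg _) hB0)
      refine le_trans (norm_K_le hX hXinv hM _ _) ?_
      rw [hB]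
      have : |t + c₂ - (t - u + c₂)| = u := by
        rw [abs_of_nonneg (by linarith [hu.1] : (0:ℝ) ≤ t + c₂ - (t - u + c₂))]; ring
      rw [this]
      exact mul_le_mul_of_nonneg_left
        (Real.exp_le_exp.mpr (mul_le_mul_of_nonneg_left (by linarith [hu.2] : u ≤ R)
          (by linarith))) (norm_nonneg _)
    have hgn : ‖g‖ * M ≤ (M + 1) * ‖g‖ := by nlinarith [norm_nonneg g]
    linarith
  have ha0 : ‖X (t + c₁) * (X (t - 0 + c₁))⁻¹ - X (t + c₂) * (X (t - 0 + c₂))⁻¹‖ ≤ (0:ℝ) := by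
    have hz : X (t + c₁) * (X (t - 0 + c₁))⁻¹ - X (t + c₂) * (X (t - 0 + c₂))⁻¹ = 0 := by
      simp only [sub_zero]
      rw [X_mul_inv_self hXinv, X_mul_inv_self hXinv, sub_self]
    rw [hz, norm_zero]
  have h := gron (by linarith : (0:ℝ) ≤ t - s) key ha0 hbound
  · have hval : X (t + c₁) * (X (t - (t - s) + c₁))⁻¹ - X (t + c₂) * (X (t - (t - s) + c₂))⁻¹ =
        X (t + c₁) * (X (s + c₁))⁻¹ - X (t + c₂) * (X (s + c₂))⁻¹ := by
      norm_num
    rw [hval] at h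
    refine le_trans h ?_
    rw [sub_zero, gronwallBound_of_K_ne_0 (by linarith : M + 1 ≠ 0)]
    simp only [zero_mul, zero_add]
    have h1 : η * B / (M + 1) ≤ η * B := by
      rw [div_le_iff₀ (by linarith : (0:ℝ) < M + 1)]
      nlinarith [mul_nonneg hη0 hB0]
    have h2 : Real.exp ((M + 1) * (t - s)) - 1 ≤ Real.exp ((M + 1) * R) := by
      have := Real.exp_le_exp.mpr (mul_le_mul_of_nonneg_left htR (by linarith : (0:ℝ) ≤ M + 1))
      linarith
    have h3 : 0 ≤ Real.exp ((M + 1) * (t - s)) - 1 := by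
      have := Real.one_le_exp (by nlinarith : (0:ℝ) ≤ (M + 1) * (t - s))
      linarith
    calc η * B / (M + 1) * (Real.exp ((M + 1) * (t - s)) - 1)
        ≤ η * B * Real.exp ((M + 1) * R) := by
          exact mul_le_mul h1 h2 h3 (mul_nonneg hη0 hB0)
    _ = η * (‖(1 : Mat q)‖ * Real.exp ((M + 1) * R)) * Real.exp ((M + 1) * R) := by rw [hB]

lemma norm_K_le' (hX : ∀ t, HasDerivAt X (A t * X t) t) (hXinv : ∀ t, IsUnit (X t))
    (hM : ∀ t, ‖A t‖ ≤ M) {b u R : ℝ} (h : |b - u| ≤ R) :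
    ‖X b * (X u)⁻¹‖ ≤ ‖(1 : Mat q)‖ * Real.exp ((M + 1) * R) := by
  have hM0 : 0 ≤ M := M_nonneg hM
  refine le_trans (norm_K_le hX hXinv hM b u) (mul_le_mul_of_nonneg_left
    (Real.exp_le_exp.mpr (mul_le_mul_of_nonneg_left h (by linarith))) (norm_nonneg _))

lemma norm_K_sub_one_le' (hX : ∀ t, HasDerivAt X (A t * X t) t) (hXinv : ∀ t, IsUnit (X t))
    (hM : ∀ t, ‖A t‖ ≤ M) (hAc : Continuous A) {b u d : ℝ} (h : |b - u| ≤ d) (hd1 : d ≤ 1) :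
    ‖X b * (X u)⁻¹ - 1‖ ≤ M * (‖(1 : Mat q)‖ * Real.exp (M + 1)) * d := by
  have hM0 : 0 ≤ M := M_nonneg hM
  have h0 : (0:ℝ) ≤ |b - u| := abs_nonneg _
  refine le_trans (norm_K_sub_one_le hX hXinv hM hAc b u) ?_
  have he : Real.exp ((M + 1) * |b - u|) ≤ Real.exp (M + 1) := by
    rw [Real.exp_le_exp]
    nlinarith
  have h1 : M * (‖(1 : Mat q)‖ * Real.exp ((M + 1) * |b - u|)) ≤
      M * (‖(1 : Mat q)‖ * Real.exp (M + 1)) :=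
    mul_le_mul_of_nonneg_left (mul_le_mul_of_nonneg_left he (norm_nonneg _)) hM0
  exact mul_le_mul h1 h h0 (by positivity)

/-- Main kernel comparison: kernels over nearby argument pairs and almost-equal translates
of `A` are close. -/
lemma K_diff (hX : ∀ t, HasDerivAt X (A t * X t) t) (hXinv : ∀ t, IsUnit (X t))
    (hM : ∀ t, ‖A t‖ ≤ M) (hAc : Continuous A) {c₁ c₂ η : ℝ} (hη0 : 0 ≤ η)
    (hη : ∀ w, ‖A (w + c₁) - A (w + c₂)‖ ≤ η)
    {R d x y x' y' : ℝ} (hd0 : 0 ≤ d) (hd1 : d ≤ 1) (hR0 : 0 ≤ R)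
    (hxy : x ≤ y) (hxy' : x' ≤ y') (hyR : y - x ≤ R) (hyR' : y' - x' ≤ R)
    (hxx' : |x - x'| ≤ d) (hyy' : |y - y'| ≤ d) :
    ‖X (y + c₁) * (X (x + c₁))⁻¹ - X (y' + c₂) * (X (x' + c₂))⁻¹‖ ≤
      2 * (M * (‖(1 : Mat q)‖ * Real.exp (M + 1)) * d) *
        (‖(1 : Mat q)‖ * Real.exp ((M + 1) * (R + 1)))
      + η * (‖(1 : Mat q)‖ * Real.exp ((M + 1) * R)) * Real.exp ((M + 1) * R) := by
  have hM0 : 0 ≤ M := M_nonneg hM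
  set T1 : Mat q := X (y + c₁) * (X (x + c₁))⁻¹ with hT1
  set T2 : Mat q := X (y' + c₁) * (X (x + c₁))⁻¹ with hT2
  set T3 : Mat q := X (y' + c₁) * (X (x' + c₁))⁻¹ with hT3
  set T4 : Mat q := X (y' + c₂) * (X (x' + c₂))⁻¹ with hT4
  have hyx' : |y' - x| ≤ R + 1 := by
    rw [abs_le] at hxx' ⊢
    constructor <;> linarith [hxx'.1, hxx'.2]
  have h12 : ‖T1 - T2‖ ≤ M * (‖(1 : Mat q)‖ * Real.exp (M + 1)) * d *
      (‖(1 : Mat q)‖ * Real.exp ((M + 1) * (R + 1))) := by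
    have hc : T1 = (X (y + c₁) * (X (y' + c₁))⁻¹) * T2 := by
      rw [hT1, hT2, X_cocycle hXinv]
    have : T1 - T2 = (X (y + c₁) * (X (y' + c₁))⁻¹ - 1) * T2 := by
      rw [hc]; noncomm_ring
    rw [this]
    refine le_trans (norm_mul_le _ _) (mul_le_mul ?_ ?_ (norm_nonneg _) ?_)
    · refine norm_K_sub_one_le' hX hXinv hM hAc ?_ hd1
      have : y + c₁ - (y' + c₁) = y - y' := by ring
      rw [this]; exact hyy'
    · exact norm_K_le' hX hXinv hM (by
        have : y' + c₁ - (x + c₁) = y' - x := by ring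
        rw [this]; exact hyx')
    · positivity
  have h23 : ‖T2 - T3‖ ≤ (‖(1 : Mat q)‖ * Real.exp ((M + 1) * (R + 1))) *
      (M * (‖(1 : Mat q)‖ * Real.exp (M + 1)) * d) := by
    have hc : T2 = T3 * (X (x' + c₁) * (X (x + c₁))⁻¹) := by
      rw [hT2, hT3, X_cocycle hXinv]
    have : T2 - T3 = T3 * (X (x' + c₁) * (X (x + c₁))⁻¹ - 1) := by
      rw [hc]; noncomm_ring
    rw [this]
    refine le_trans (norm_mul_le _ _) (mul_le_mul ?_ ?_ (norm_nonneg _) ?_)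
    · refine norm_K_le' hX hXinv hM (by
        have : y' + c₁ - (x' + c₁) = y' - x' := by ring
        rw [this]
        rw [abs_of_nonneg (by linarith)]
        linarith)
    · refine norm_K_sub_one_le' hX hXinv hM hAc ?_ hd1
      have : x' + c₁ - (x + c₁) = -(x - x') := by ring
      rw [this, abs_neg]; exact hxx'
    · positivity
  have h34 : ‖T3 - T4‖ ≤ η * (‖(1 : Mat q)‖ * Real.exp ((M + 1) * R)) *
      Real.exp ((M + 1) * R) := K_compare hX hXinv hM hη0 hη hxy' hyR'
  have hsplit : T1 - T4 = (T1 - T2) + ((T2 - T3) + (T3 - T4)) := by abel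
  calc ‖T1 - T4‖ = ‖(T1 - T2) + ((T2 - T3) + (T3 - T4))‖ := by rw [hsplit]
  _ ≤ ‖T1 - T2‖ + (‖T2 - T3‖ + ‖T3 - T4‖) :=
        le_trans (norm_add_le _ _) (add_le_add le_rfl (norm_add_le _ _))
  _ ≤ _ := by ring_nf at h12 h23 h34 ⊢; linarith

end Kernel

section Seq
variable {ts : ℤ → ℝ}

/-- Uniform escape: there is `N` such that any `N` consecutive points spread more than `L`. -/
lemma exists_N_gap (hts : StrictMono ts) (htop : Tendsto ts atTop atTop)
    (hEqui : EquiAP ts) (L : ℝ) : ∃ N : ℕ, 0 < N ∧ ∀ m : ℤ, L < ts (m + N) - ts m := by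
  obtain ⟨l, hl0, hl⟩ := hEqui 1 one_pos
  -- a uniform level C
  have hne : (Finset.Icc (0:ℤ) l).Nonempty := ⟨0, by simp; omega⟩
  set C : ℝ := ((Finset.Icc (0:ℤ) l).image (fun s => ts s + L + 1)).max' (hne.image _) + 1
    with hCdef
  have hC : ∀ s ∈ Finset.Icc (0:ℤ) l, ts s + L + 1 < C := by
    intro s hs
    have := Finset.le_max' _ (ts s + L + 1) (Finset.mem_image_of_mem (fun z : ℤ => ts z + L + 1) hs)
    rw [hCdef]; linarith
  obtain ⟨K, hK⟩ : ∃ K : ℤ, ∀ k ≥ K, C < ts k :=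
    (htop.eventually (eventually_gt_atTop C)).exists_forall_of_atTop
  refine ⟨(max K 1).toNat, by omega, ?_⟩
  intro m
  obtain ⟨T, hT, hT2⟩ := hl (m - l)
  simp only [Set.mem_Icc] at hT2
  set N : ℕ := (max K 1).toNat with hNdef
  have hNK : K ≤ (N : ℤ) := by omega
  set s : ℤ := m - T with hsdef
  have hs0 : 0 ≤ s := by omega
  have hsl : s ≤ l := by omega
  have hequi := hT (N : ℤ) s
  have hTs : T + s = m := by omega
  rw [hTs] at hequi
  have h1 : C < ts (s + N) := hK _ (by omega)
  have h2 : ts s + L + 1 < C := hC s (by simp [Finset.mem_Icc]; omega)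
  have h3 := abs_le.mp hequi
  linarith [h3.1, h3.2]

/-- Index of the last point `≤ x`. -/
lemma exists_greatest_le (hts : StrictMono ts) (htop : Tendsto ts atTop atTop)
    (hbot : Tendsto ts atBot atBot) (x : ℝ) :
    ∃ k₀ : ℤ, ts k₀ ≤ x ∧ ∀ k : ℤ, k₀ < k → x < ts k := by
  have hne : ∃ k : ℤ, ts k ≤ x := by
    have := hbot.eventually (eventually_le_atBot x)
    exact this.exists
  have hbdd : ∃ b : ℤ, ∀ k : ℤ, ts k ≤ x → k ≤ b := by
    obtain ⟨b, hb⟩ := (htop.eventually (eventually_gt_atTop x)).exists_forall_of_atTop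
    refine ⟨b, fun k hk => ?_⟩
    by_contra hkb
    exact absurd hk (not_le.mpr (hb k (by omega)))
  obtain ⟨b, hb⟩ := hbdd
  obtain ⟨k₀, hk₀, hgr⟩ := Int.exists_greatest_of_bdd ⟨b, fun z hz => hb z hz⟩ hne
  refine ⟨k₀, hk₀, fun k hk => ?_⟩
  by_contra hle
  exact absurd (hgr k (not_lt.mp hle)) (by omega)

/-- Uniformly bounded number of points of the sequence in any window of length `L`. -/
lemma window_bound (hts : StrictMono ts) (htop : Tendsto ts atTop atTop)
    (hbot : Tendsto ts atBot atBot) (hEqui : EquiAP ts) (L : ℝ) :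
    ∃ N : ℕ, ∀ x : ℝ, ∃ k₀ : ℤ, ∀ k : ℤ, x ≤ ts k → ts k ≤ x + L → k ∈ Set.Icc k₀ (k₀ + N) := by
  obtain ⟨N, hN0, hN⟩ := exists_N_gap hts htop hEqui L
  refine ⟨N, fun x => ?_⟩
  obtain ⟨k₀, hk₀, hgr⟩ := exists_greatest_le hts htop hbot x
  refine ⟨k₀, fun k h1 h2 => ?_⟩
  constructor
  · by_contra hlt
    push_neg at hlt
    have : ts k < ts k₀ := hts hlt
    linarith
  · by_contra hgt
    push_neg at hgt
    have h3 : k₀ + 1 + N ≤ k := by omega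
    have h4 : ts (k₀ + 1 + (N:ℤ)) ≤ ts k := hts.monotone h3
    have h5 : L < ts (k₀ + 1 + N) - ts (k₀ + 1) := hN (k₀ + 1)
    have h6 : x < ts (k₀ + 1) := hgr _ (by omega)
    linarith

end Seq

section Abdd
variable {q : ℕ} {A : ℝ → Mat q}

lemma A_bounded (hA : APR A) : ∃ M : ℝ, 0 ≤ M ∧ ∀ t : ℝ, ‖A t‖ ≤ M := by
  obtain ⟨l, hl0, hl⟩ := hA.2 1 one_pos
  obtain ⟨C, hC⟩ := (isCompact_Icc (a := (0:ℝ)) (b := l)).exists_bound_of_continuousOn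
    hA.1.continuousOn
  refine ⟨C + 1, ?_, fun t => ?_⟩
  · have := le_trans (norm_nonneg (A 0)) (hC 0 (by constructor <;> linarith))
    linarith
  · obtain ⟨τ, hτ, hτ2⟩ := hl (t - l)
    simp only [Set.mem_Icc] at hτ2
    have h1 := hτ (t - τ)
    have h2 : t - τ + τ = t := by ring
    rw [h2] at h1
    have h3 : ‖A (t - τ)‖ ≤ C := hC _ (by constructor <;> linarith [hτ2.1, hτ2.2])
    calc ‖A t‖ = ‖A (t - τ) + (A t - A (t - τ))‖ := by rw [add_sub_cancel]
    _ ≤ ‖A (t - τ)‖ + ‖A t - A (t - τ)‖ := norm_add_le _ _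
    _ ≤ C + 1 := add_le_add h3 (by first | exact h1 | (rw [norm_sub_rev]; exact h1))

lemma A_unifCont (hA : APR A) {ε : ℝ} (hε : 0 < ε) :
    ∃ δ : ℝ, 0 < δ ∧ δ ≤ 1 ∧ ∀ a b : ℝ, |a - b| ≤ δ → ‖A a - A b‖ ≤ ε := by
  obtain ⟨l, hl0, hl⟩ := hA.2 (ε/3) (by linarith)
  have hcmp : IsCompact (Set.Icc (-1 : ℝ) (l + 1)) := isCompact_Icc
  have huc := hcmp.uniformContinuousOn_of_continuous hA.1.continuousOn
  replace huc := (Metric.uniformContinuousOn_iff (f := A)).mp huc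
  obtain ⟨δ₀, hδ₀, hδ⟩ := huc (ε/3) (by linarith)
  refine ⟨min (δ₀/2) 1, by positivity, min_le_right _ _, fun a b hab => ?_⟩
  obtain ⟨τ, hτ, hτ2⟩ := hl (a - l)
  simp only [Set.mem_Icc] at hτ2
  have hab1 : |a - b| ≤ 1 := le_trans hab (min_le_right _ _)
  have hab0 : |a - b| < δ₀ := lt_of_le_of_lt (le_trans hab (min_le_left _ _)) (by linarith)
  rw [abs_le] at hab1
  have hmem1 : a - τ ∈ Set.Icc (-1 : ℝ) (l + 1) := by
    constructor <;> [linarith [hτ2.1, hτ2.2]; linarith [hτ2.1, hτ2.2]]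
  have hmem2 : b - τ ∈ Set.Icc (-1 : ℝ) (l + 1) := by
    constructor <;> [linarith [hτ2.1, hτ2.2]; linarith [hτ2.1, hτ2.2]]
  have hd : dist (a - τ) (b - τ) < δ₀ := by
    rw [Real.dist_eq]
    have : a - τ - (b - τ) = a - b := by ring
    rwa [this]
  have h3 := hδ _ hmem1 _ hmem2 hd
  rw [dist_eq_norm] at h3
  have h1 := hτ (a - τ)
  have h2 := hτ (b - τ)
  have e1 : a - τ + τ = a := by ring
  have e2 : b - τ + τ = b := by ring
  rw [e1] at h1
  rw [e2] at h2
  calc ‖A a - A b‖ = ‖(A a - A (a - τ)) + ((A (a - τ) - A (b - τ)) + (A (b - τ) - A b))‖ := by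
        congr 1; abel
  _ ≤ ‖A a - A (a - τ)‖ + (‖A (a - τ) - A (b - τ)‖ + ‖A (b - τ) - A b‖) :=
        le_trans (norm_add_le _ _) (add_le_add le_rfl (norm_add_le _ _))
  _ ≤ ε/3 + (ε/3 + ε/3) := by
        refine add_le_add (by first | exact h1 | (rw [norm_sub_rev]; exact h1))
          (add_le_add h3.le (by first | exact h2 | (rw [norm_sub_rev]; exact h2)))
  _ = ε := by ring

end Abdd

def aMulL (q : ℕ) : Mat q →ₗ[ℂ] (Vec q →L[ℂ] Vec q) :=
  (LinearMap.toContinuousLinearMap.toLinearMap).comp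
    (Matrix.toEuclideanLin : Mat q ≃ₗ[ℂ] (Vec q →ₗ[ℂ] Vec q)).toLinearMap

def aMulCLM (q : ℕ) : @ContinuousLinearMap ℂ ℂ _ _ (RingHom.id ℂ) (Mat q)
    PseudoMetricSpace.toUniformSpace.toTopologicalSpace _ (Vec q →L[ℂ] Vec q) _ _ _ _ :=
  LinearMap.toContinuousLinearMap (aMulL q)

lemma aMulCLM_apply {q : ℕ} (M : Mat q) (v : Vec q) : aMulCLM q M v = aMul M v := rfl

lemma aMul_bound {q : ℕ} (M : Mat q) (v : Vec q) :
    ‖aMul M v‖ ≤ ‖aMulCLM q‖ * (‖M‖ * ‖v‖) := by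
  rw [← aMulCLM_apply]
  calc ‖aMulCLM q M v‖ ≤ ‖aMulCLM q‖ * ‖M‖ * ‖v‖ := (aMulCLM q).le_opNorm₂ M v
  _ = ‖aMulCLM q‖ * (‖M‖ * ‖v‖) := by ring

lemma aMul_sub_left {q : ℕ} (M N : Mat q) (v : Vec q) :
    aMul M v - aMul N v = aMul (M - N) v := by
  simp [aMul, map_sub, LinearMap.sub_apply]

lemma aMul_sub_right {q : ℕ} (M : Mat q) (v w : Vec q) :
    aMul M v - aMul M w = aMul M (v - w) := by
  simp [aMul, map_sub]

lemma integrand_integrable {q : ℕ} {Kc : ℝ → Mat q} {f : ℝ → Vec q} {Cf : ℝ}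
    (hKc : Continuous Kc) (hfloc : LocallyIntegrable f) (hCf : ∀ t, ‖f t‖ ≤ Cf)
    (b c : ℝ) : IntervalIntegrable (fun u => aMul (Kc u) (f u)) volume b c := by
  rw [intervalIntegrable_iff]
  have hmeas : AEStronglyMeasurable (fun u => aMul (Kc u) (f u))
      (volume.restrict (Set.uIoc b c)) := by
    have h1 : AEStronglyMeasurable Kc (volume.restrict (Set.uIoc b c)) :=
      (show @Continuous ℝ (Mat q) _ PseudoMetricSpace.toUniformSpace.toTopologicalSpace Kc
        from hKc).aestronglyMeasurable.restrict
    have h2 : AEStronglyMeasurable f (volume.restrict (Set.uIoc b c)) :=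
      hfloc.aestronglyMeasurable.restrict
    exact (aMulCLM q).aestronglyMeasurable_comp₂ h1 h2
  refine Integrable.mono' (g := fun u => ‖aMulCLM q‖ * (‖Kc u‖ * Cf)) ?_ hmeas ?_
  · have hcont : Continuous fun u => ‖aMulCLM q‖ * (‖Kc u‖ * Cf) :=
      (continuous_const.mul (hKc.norm.mul continuous_const))
    exact hcont.integrableOn_uIoc
  · filter_upwards with u
    refine le_trans (aMul_bound _ _) ?_
    have h0 : ‖f u‖ ≤ Cf := hCf u
    have := mul_le_mul_of_nonneg_left h0 (norm_nonneg (Kc u))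
    nlinarith [norm_nonneg (aMulCLM q), norm_nonneg (Kc u), mul_le_mul_of_nonneg_left
      (mul_le_mul_of_nonneg_left h0 (norm_nonneg (Kc u))) (norm_nonneg (aMulCLM q))]

end AuxKernel


section Pair
open Real Set

variable {q : ℕ} {ts : ℤ → ℝ} {A X : ℝ → Mat q} {f : ℝ → Vec q}
  {M θ Cf cB σ ε₁ : ℝ} {Nw : ℕ}

/-- change of variables for the impulse integrals -/
lemma h_cov (X : ℝ → Mat q) (f : ℝ → Vec q) (ts : ℤ → ℝ) (j : ℤ) :
    (∫ u in (ts j)..(ts (j+1)), aMul (X (ts (j+1)) * (X u)⁻¹) (f u)) =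
      ∫ v in (0:ℝ)..(ts (j+1) - ts j),
        aMul (X (ts (j+1)) * (X (ts j + v))⁻¹) (f (ts j + v)) := by
  have h := intervalIntegral.integral_comp_add_left (a := (0:ℝ)) (b := ts (j+1) - ts j)
    (fun u => aMul (X (ts (j+1)) * (X u)⁻¹) (f u)) (ts j)
  have e1 : ts j + (0:ℝ) = ts j := by ring
  have e2 : ts j + (ts (j+1) - ts j) = ts (j+1) := by ring
  rw [e1, e2] at h
  rw [h]

set_option maxHeartbeats 2000000 in
/-- The core estimate: under the closeness hypotheses for the pair `(m, a)`,
the integrals over the corresponding intervals are uniformly close. -/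
lemma pair_estimate
    (hts : StrictMono ts) (htop : Filter.Tendsto ts Filter.atTop Filter.atTop)
    (hbot : Filter.Tendsto ts Filter.atBot Filter.atBot)
    (hθ : ∀ n : ℤ, ts (n+1) - ts n ≤ θ)
    (hX : ∀ t, HasDerivAt X (A t * X t) t) (hXinv : ∀ t, IsUnit (X t))
    (hM : ∀ t, ‖A t‖ ≤ M) (hAc : Continuous A)
    (hCf : ∀ t, ‖f t‖ ≤ Cf) (hCf0 : 0 ≤ Cf) (hfloc : LocallyIntegrable f)
    (hσ0 : 0 < σ) (hσh : σ ≤ 1/2) (hε₁ : σ ≤ ε₁)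
    (hNw : ∀ x : ℝ, ∃ k₀ : ℤ, ∀ k : ℤ, x ≤ ts k → ts k ≤ x + (θ + 10) →
      k ∈ Set.Icc k₀ (k₀ + (Nw:ℤ)))
    {m a : ℤ} {τ₁ τ₂ : ℝ}
    (hφ : ∀ n : ℤ, |(ts (n + m) - ts m) - (ts (n + a) - ts a)| ≤ 2*σ)
    (hA3 : ∀ w : ℝ, ‖A (w + ts m) - A (w + ts a)‖ ≤ 3*ε₁)
    (hτ₁ : ∀ s : ℝ, (∀ k : ℤ, s ∉ Set.Ioo (ts k - σ) (ts k + σ)) → ‖f (s + τ₁) - f s‖ ≤ σ)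
    (hτ₂ : ∀ s : ℝ, (∀ k : ℤ, s ∉ Set.Ioo (ts k - σ) (ts k + σ)) → ‖f (s + τ₂) - f s‖ ≤ σ)
    (hm1 : |(ts m - τ₁) - (ts a - τ₂)| ≤ σ)
    (hδf : ∀ τ' : ℝ, |τ'| ≤ 3*σ → ∀ (k : ℤ) (s : ℝ), s ∈ Set.Icc (ts k) (ts (k+1)) →
      s + τ' ∈ Set.Icc (ts k) (ts (k+1)) → ‖f (s + τ') - f s‖ ≤ ε₁)
    (n : ℤ) :
    ‖(∫ u in (ts (n+m))..(ts (n+m+1)), aMul (X (ts (n+m+1)) * (X u)⁻¹) (f u)) -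
      (∫ u in (ts (n+a))..(ts (n+a+1)), aMul (X (ts (n+a+1)) * (X u)⁻¹) (f u))‖ ≤
      σ * (‖aMulCLM q‖ * (‖(1 : Mat q)‖ * Real.exp ((M+1)*(θ+1))) *
            (4*M*(‖(1 : Mat q)‖ * Real.exp (M+1))*Cf*θ + 2*θ + 2*Cf*((Nw:ℝ)+1)*20 + 8*Cf))
      + ε₁ * (‖aMulCLM q‖ *
            (Cf*θ*(3*(‖(1 : Mat q)‖ * Real.exp ((M+1)*θ))*Real.exp ((M+1)*θ)) +
             (‖(1 : Mat q)‖ * Real.exp ((M+1)*(θ+1)))*θ)) := by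
  classical
  have hM0 : 0 ≤ M := M_nonneg hM
  have hE10 : (0:ℝ) ≤ ‖(1 : Mat q)‖ := norm_nonneg _
  have hcB0 : (0:ℝ) ≤ ‖aMulCLM q‖ := ContinuousLinearMap.opNorm_nonneg _
  have hε₁0 : 0 < ε₁ := lt_of_lt_of_le hσ0 hε₁
  have hg0 : 0 < ts (n+m+1) - ts (n+m) := sub_pos.mpr (hts (lt_add_one _))
  have hg'0 : 0 < ts (n+a+1) - ts (n+a) := sub_pos.mpr (hts (lt_add_one _))
  have hgθ : ts (n+m+1) - ts (n+m) ≤ θ := hθ _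
  have hg'θ : ts (n+a+1) - ts (n+a) ≤ θ := hθ _
  have hθ0 : 0 < θ := lt_of_lt_of_le hg0 hgθ
  set E1 : ℝ := ‖(1 : Mat q)‖ with hE1def
  set cB : ℝ := ‖aMulCLM q‖ with hcBdef
  set B1 : ℝ := E1 * Real.exp ((M+1)*(θ+1)) with hB1def
  have hB10 : 0 ≤ B1 := mul_nonneg hE10 (Real.exp_nonneg _)
  set KD : ℝ := 2 * (M * (E1 * Real.exp (M+1)) * (2*σ)) * (E1 * Real.exp ((M+1)*(θ+1)))
    + (3*ε₁) * (E1 * Real.exp ((M+1)*θ)) * Real.exp ((M+1)*θ) with hKDdef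
  have hKD0 : 0 ≤ KD := by
    rw [hKDdef]; positivity
  set g : ℝ := ts (n+m+1) - ts (n+m) with hgdef
  set g' : ℝ := ts (n+a+1) - ts (n+a) with hg'def
  set G : ℝ := min g g' with hGdef
  have hG0 : 0 < G := lt_min hg0 hg'0
  have hGθ : G ≤ θ := le_trans (min_le_left _ _) hgθ
  have hφn : |(ts (n+m) - ts m) - (ts (n+a) - ts a)| ≤ 2*σ := hφ n
  have hφn1 : |(ts (n+m+1) - ts m) - (ts (n+a+1) - ts a)| ≤ 2*σ := by
    have h := hφ (n+1)
    rw [show n+1+m = n+m+1 from by ring, show n+1+a = n+a+1 from by ring] at h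
    exact h
  have hgg' : |g - g'| ≤ 4*σ := by
    rw [hgdef, hg'def]
    have h1 := abs_le.mp hφn
    have h2 := abs_le.mp hφn1
    rw [abs_le]
    constructor <;> linarith [h1.1, h1.2, h2.1, h2.2]
  -- integrability
  have hKcm : Continuous (fun u : ℝ => X (ts (n+m+1)) * (X u)⁻¹) :=
    continuous_const.mul (continuous_Xinv hX hXinv)
  have hKca : Continuous (fun u : ℝ => X (ts (n+a+1)) * (X u)⁻¹) :=
    continuous_const.mul (continuous_Xinv hX hXinv)
  have hIm : ∀ b c : ℝ, IntervalIntegrable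
      (fun v => aMul (X (ts (n+m+1)) * (X (ts (n+m) + v))⁻¹) (f (ts (n+m) + v))) volume b c := by
    intro b c
    have h0 := (integrand_integrable hKcm hfloc hCf (ts (n+m) + b) (ts (n+m) + c)).comp_add_left
      (ts (n+m))
    simpa using h0
  have hIa : ∀ b c : ℝ, IntervalIntegrable
      (fun v => aMul (X (ts (n+a+1)) * (X (ts (n+a) + v))⁻¹) (f (ts (n+a) + v))) volume b c := by
    intro b c
    have h0 := (integrand_integrable hKca hfloc hCf (ts (n+a) + b) (ts (n+a) + c)).comp_add_left
      (ts (n+a))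
    simpa using h0
  -- change of variables
  rw [h_cov X f ts (n+m), h_cov X f ts (n+a)]
  rw [← hgdef, ← hg'def]
  -- split at G
  rw [← intervalIntegral.integral_add_adjacent_intervals (hIm 0 G) (hIm G g),
    ← intervalIntegral.integral_add_adjacent_intervals (hIa 0 G) (hIa G g')]
  -- bad set
  obtain ⟨k₁, hk₁⟩ := hNw (ts (n+m) - τ₁ - 5*σ)
  obtain ⟨k₂, hk₂⟩ := hNw (ts (n+a) - τ₂ - 5*σ)
  set Bad : Set ℝ :=
    (⋃ k ∈ Finset.Icc k₁ (k₁ + (Nw:ℤ)),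
      Set.Icc (ts k - (ts (n+m) - τ₁) - 5*σ) (ts k - (ts (n+m) - τ₁) + 5*σ)) ∪
    (⋃ k ∈ Finset.Icc k₂ (k₂ + (Nw:ℤ)),
      Set.Icc (ts k - (ts (n+a) - τ₂) - 5*σ) (ts k - (ts (n+a) - τ₂) + 5*σ)) with hBadDef
  have hBadMeas : MeasurableSet Bad := by
    rw [hBadDef]
    exact ((Finset.Icc k₁ (k₁ + (Nw:ℤ))).measurableSet_biUnion
      (fun k _ => measurableSet_Icc)).union
      ((Finset.Icc k₂ (k₂ + (Nw:ℤ))).measurableSet_biUnion (fun k _ => measurableSet_Icc))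
  have hBadVol : volume Bad ≤ ENNReal.ofReal (((Nw:ℝ)+1) * (20*σ)) := by
    have hpiece : ∀ (k₀ : ℤ) (c : ℝ), volume (⋃ k ∈ Finset.Icc k₀ (k₀ + (Nw:ℤ)),
        Set.Icc (ts k - c - 5*σ) (ts k - c + 5*σ)) ≤ ENNReal.ofReal (((Nw:ℝ)+1) * (10*σ)) := by
      intro k₀ c
      refine le_trans (measure_biUnion_finset_le _ _) ?_
      have hvol1 : ∀ k : ℤ, volume (Set.Icc (ts k - c - 5*σ) (ts k - c + 5*σ)) =
          ENNReal.ofReal (10*σ) := by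
        intro k; rw [Real.volume_Icc]; congr 1; ring
      calc ∑ k ∈ Finset.Icc k₀ (k₀ + (Nw:ℤ)), volume (Set.Icc (ts k - c - 5*σ) (ts k - c + 5*σ))
          = ∑ _k ∈ Finset.Icc k₀ (k₀ + (Nw:ℤ)), ENNReal.ofReal (10*σ) :=
            Finset.sum_congr rfl (fun k _ => hvol1 k)
      _ = (Finset.Icc k₀ (k₀ + (Nw:ℤ))).card • ENNReal.ofReal (10*σ) := Finset.sum_const _
      _ = (Nw + 1) • ENNReal.ofReal (10*σ) := by
            rw [Int.card_Icc]
            congr 1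
            omega
      _ = ENNReal.ofReal (((Nw:ℝ)+1) * (10*σ)) := by
            rw [nsmul_eq_mul, ← ENNReal.ofReal_natCast (Nw+1),
              ← ENNReal.ofReal_mul (by positivity)]
            congr 1
            push_cast
            ring
      _ ≤ ENNReal.ofReal (((Nw:ℝ)+1) * (10*σ)) := le_refl _
    rw [hBadDef]
    refine le_trans (measure_union_le _ _) ?_
    refine le_trans (add_le_add (hpiece k₁ _) (hpiece k₂ _)) ?_
    rw [← ENNReal.ofReal_add (by positivity) (by positivity)]
    apply ENNReal.ofReal_le_ofReal
    nlinarith [Nat.cast_nonneg (α := ℝ) Nw, hσ0.le]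
  -- good point estimate for f
  have hgoodf : ∀ v : ℝ, v ∈ Set.Ioc 0 G → v ∉ Bad →
      ‖f (ts (n+m) + v) - f (ts (n+a) + v)‖ ≤ 2*σ + ε₁ := by
    intro v hv hvB
    obtain ⟨hv0, hvG⟩ := hv
    have hc₁ : ∀ k : ℤ, ¬ |(v + (ts (n+m) - τ₁)) - ts k| ≤ 5*σ := by
      intro k hk
      apply hvB
      rw [hBadDef]
      refine Or.inl (Set.mem_iUnion₂.mpr ⟨k, ?_, ?_⟩)
      · have hb := abs_le.mp hk
        have hvg : v ≤ g := le_trans hvG (min_le_left _ _)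
        have hvθ : v ≤ θ := le_trans hvg hgθ
        have hmem := hk₁ k (by linarith [hb.2]) (by linarith [hb.1])
        exact Finset.mem_Icc.mpr (Set.mem_Icc.mp hmem)
      · have hb := abs_le.mp hk
        constructor <;> linarith [hb.1, hb.2]
    have hc₂ : ∀ k : ℤ, ¬ |(v + (ts (n+a) - τ₂)) - ts k| ≤ 5*σ := by
      intro k hk
      apply hvB
      rw [hBadDef]
      refine Or.inr (Set.mem_iUnion₂.mpr ⟨k, ?_, ?_⟩)
      · have hb := abs_le.mp hk
        have hvg : v ≤ g' := le_trans hvG (min_le_right _ _)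
        have hvθ : v ≤ θ := le_trans hvg hg'θ
        have hmem := hk₂ k (by linarith [hb.2]) (by linarith [hb.1])
        exact Finset.mem_Icc.mpr (Set.mem_Icc.mp hmem)
      · have hb := abs_le.mp hk
        constructor <;> linarith [hb.1, hb.2]
    have h1 : ‖f (ts (n+m) + v) - f (v + (ts (n+m) - τ₁))‖ ≤ σ := by
      have hg1 : ∀ k : ℤ, (v + (ts (n+m) - τ₁)) ∉ Set.Ioo (ts k - σ) (ts k + σ) := by
        intro k hmem
        obtain ⟨ha, hb⟩ := hmem
        exact hc₁ k (abs_le.mpr ⟨by linarith, by linarith⟩)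
      have := hτ₁ _ hg1
      rw [show (v + (ts (n+m) - τ₁)) + τ₁ = ts (n+m) + v from by ring] at this
      exact this
    have h3 : ‖f (ts (n+a) + v) - f (v + (ts (n+a) - τ₂))‖ ≤ σ := by
      have hg2 : ∀ k : ℤ, (v + (ts (n+a) - τ₂)) ∉ Set.Ioo (ts k - σ) (ts k + σ) := by
        intro k hmem
        obtain ⟨ha, hb⟩ := hmem
        exact hc₂ k (abs_le.mpr ⟨by linarith, by linarith⟩)
      have := hτ₂ _ hg2
      rw [show (v + (ts (n+a) - τ₂)) + τ₂ = ts (n+a) + v from by ring] at this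
      exact this
    have hs12 : |(v + (ts (n+m) - τ₁)) - (v + (ts (n+a) - τ₂))| ≤ 3*σ := by
      have ha1 := abs_le.mp hφn
      have ha2 := abs_le.mp hm1
      rw [abs_le]
      constructor <;> linarith [ha1.1, ha1.2, ha2.1, ha2.2]
    obtain ⟨k₀, hk₀le, hk₀gr⟩ := exists_greatest_le hts htop hbot (v + (ts (n+a) - τ₂))
    have hup : v + (ts (n+a) - τ₂) < ts (k₀+1) := hk₀gr (k₀+1) (lt_add_one _)
    have hlo5 : 5*σ < (v + (ts (n+a) - τ₂)) - ts k₀ := by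
      have habs := not_le.mp (hc₂ k₀)
      rwa [abs_of_nonneg (by linarith)] at habs
    have hup5 : 5*σ < ts (k₀+1) - (v + (ts (n+a) - τ₂)) := by
      have habs := not_le.mp (hc₂ (k₀+1))
      rwa [abs_of_nonpos (by linarith), neg_sub] at habs
    have hmem1 : (v + (ts (n+a) - τ₂)) ∈ Set.Icc (ts k₀) (ts (k₀+1)) := ⟨hk₀le, hup.le⟩
    have hmem2 : (v + (ts (n+a) - τ₂)) + ((v + (ts (n+m) - τ₁)) - (v + (ts (n+a) - τ₂))) ∈
        Set.Icc (ts k₀) (ts (k₀+1)) := by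
      have hb := abs_le.mp hs12
      constructor <;> [linarith [hb.1]; linarith [hb.2]]
    have h2 := hδf _ hs12 k₀ _ hmem1 hmem2
    rw [show (v + (ts (n+a) - τ₂)) + ((v + (ts (n+m) - τ₁)) - (v + (ts (n+a) - τ₂))) =
      v + (ts (n+m) - τ₁) from by ring] at h2
    calc ‖f (ts (n+m) + v) - f (ts (n+a) + v)‖
        = ‖(f (ts (n+m) + v) - f (v + (ts (n+m) - τ₁))) +
            ((f (v + (ts (n+m) - τ₁)) - f (v + (ts (n+a) - τ₂))) +
             (f (v + (ts (n+a) - τ₂)) - f (ts (n+a) + v)))‖ := by congr 1; abel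
    _ ≤ ‖f (ts (n+m) + v) - f (v + (ts (n+m) - τ₁))‖ +
          (‖f (v + (ts (n+m) - τ₁)) - f (v + (ts (n+a) - τ₂))‖ +
           ‖f (v + (ts (n+a) - τ₂)) - f (ts (n+a) + v)‖) :=
        le_trans (norm_add_le _ _) (add_le_add le_rfl (norm_add_le _ _))
    _ ≤ σ + (ε₁ + σ) := by
        refine add_le_add h1 (add_le_add h2 ?_)
        rw [norm_sub_rev]; exact h3
    _ = 2*σ + ε₁ := by ring
  -- kernel difference estimate
  have hKdiff : ∀ v : ℝ, v ∈ Set.Ioc 0 G →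
      ‖X (ts (n+m+1)) * (X (ts (n+m) + v))⁻¹ - X (ts (n+a+1)) * (X (ts (n+a) + v))⁻¹‖ ≤ KD := by
    intro v hv
    obtain ⟨hv0, hvG⟩ := hv
    have hvg : v ≤ g := le_trans hvG (min_le_left _ _)
    have hvg' : v ≤ g' := le_trans hvG (min_le_right _ _)
    have h := K_diff (c₁ := ts m) (c₂ := ts a) (η := 3*ε₁) hX hXinv hM hAc (by linarith) hA3
      (R := θ) (d := 2*σ) (x := (ts (n+m) - ts m) + v) (y := ts (n+m+1) - ts m)
      (x' := (ts (n+a) - ts a) + v) (y' := ts (n+a+1) - ts a)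
      (by linarith) (by linarith) (by linarith)
      (by linarith [hvg, hgdef.le, hgdef.ge]) (by linarith [hvg', hg'def.le, hg'def.ge])
      (by linarith [hvg, hgdef.le, hgdef.ge, hv0]) (by linarith [hvg', hg'def.le, hg'def.ge, hv0])
      (by rw [show ((ts (n+m) - ts m) + v) - ((ts (n+a) - ts a) + v) =
            (ts (n+m) - ts m) - (ts (n+a) - ts a) from by ring]; exact hφn)
      hφn1
    rw [show (ts (n+m+1) - ts m) + ts m = ts (n+m+1) from by ring,
      show ((ts (n+m) - ts m) + v) + ts m = ts (n+m) + v from by ring,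
      show (ts (n+a+1) - ts a) + ts a = ts (n+a+1) from by ring,
      show ((ts (n+a) - ts a) + v) + ts a = ts (n+a) + v from by ring] at h
    rw [hKDdef]
    exact h
  -- pointwise bound on the difference of integrands
  have hpt : ∀ v : ℝ, v ∈ Set.Ioc 0 G →
      ‖aMul (X (ts (n+m+1)) * (X (ts (n+m) + v))⁻¹) (f (ts (n+m) + v)) -
        aMul (X (ts (n+a+1)) * (X (ts (n+a) + v))⁻¹) (f (ts (n+a) + v))‖ ≤
      (cB * (KD * Cf) + cB * (B1 * (2*σ + ε₁))) +
        (cB * (B1 * (2*Cf))) * Bad.indicator (fun _ => (1:ℝ)) v := by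
    intro v hv
    obtain ⟨hv0, hvG⟩ := hv
    have hvg' : v ≤ g' := le_trans hvG (min_le_right _ _)
    have hKa : ‖X (ts (n+a+1)) * (X (ts (n+a) + v))⁻¹‖ ≤ B1 := by
      rw [hB1def]
      refine norm_K_le' hX hXinv hM ?_
      rw [show ts (n+a+1) - (ts (n+a) + v) = g' - v from by rw [hg'def]; ring]
      rw [abs_of_nonneg (by linarith)]
      linarith
    have hsplit : aMul (X (ts (n+m+1)) * (X (ts (n+m) + v))⁻¹) (f (ts (n+m) + v)) -
        aMul (X (ts (n+a+1)) * (X (ts (n+a) + v))⁻¹) (f (ts (n+a) + v)) =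
        aMul (X (ts (n+m+1)) * (X (ts (n+m) + v))⁻¹ -
          X (ts (n+a+1)) * (X (ts (n+a) + v))⁻¹) (f (ts (n+m) + v)) +
        aMul (X (ts (n+a+1)) * (X (ts (n+a) + v))⁻¹)
          (f (ts (n+m) + v) - f (ts (n+a) + v)) := by
      rw [← aMul_sub_left, ← aMul_sub_right]
      abel
    rw [hsplit]
    refine le_trans (norm_add_le _ _) ?_
    have hterm1 : ‖aMul (X (ts (n+m+1)) * (X (ts (n+m) + v))⁻¹ -
        X (ts (n+a+1)) * (X (ts (n+a) + v))⁻¹) (f (ts (n+m) + v))‖ ≤ cB * (KD * Cf) := by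
      refine le_trans (aMul_bound _ _) ?_
      rw [hcBdef]
      refine mul_le_mul_of_nonneg_left ?_ (ContinuousLinearMap.opNorm_nonneg _)
      exact mul_le_mul (hKdiff v ⟨hv0, hvG⟩) (hCf _) (norm_nonneg _) hKD0
    by_cases hvB : v ∈ Bad
    · have hterm2 : ‖aMul (X (ts (n+a+1)) * (X (ts (n+a) + v))⁻¹)
          (f (ts (n+m) + v) - f (ts (n+a) + v))‖ ≤ cB * (B1 * (2*Cf)) := by
        refine le_trans (aMul_bound _ _) ?_
        rw [hcBdef]
        refine mul_le_mul_of_nonneg_left ?_ (ContinuousLinearMap.opNorm_nonneg _)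
        refine mul_le_mul hKa ?_ (norm_nonneg _) hB10
        calc ‖f (ts (n+m) + v) - f (ts (n+a) + v)‖ ≤ ‖f (ts (n+m) + v)‖ + ‖f (ts (n+a) + v)‖ :=
              norm_sub_le _ _
        _ ≤ 2*Cf := by linarith [hCf (ts (n+m) + v), hCf (ts (n+a) + v)]
      rw [Set.indicator_of_mem hvB]
      have hnn : 0 ≤ cB * (B1 * (2*σ + ε₁)) := by positivity
      calc _ ≤ cB * (KD * Cf) + cB * (B1 * (2*Cf)) := add_le_add hterm1 hterm2
      _ ≤ _ := by rw [mul_one]; linarith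
    · have hterm2 : ‖aMul (X (ts (n+a+1)) * (X (ts (n+a) + v))⁻¹)
          (f (ts (n+m) + v) - f (ts (n+a) + v))‖ ≤ cB * (B1 * (2*σ + ε₁)) := by
        refine le_trans (aMul_bound _ _) ?_
        rw [hcBdef]
        refine mul_le_mul_of_nonneg_left ?_ (ContinuousLinearMap.opNorm_nonneg _)
        exact mul_le_mul hKa (hgoodf v ⟨hv0, hvG⟩ hvB) (norm_nonneg _) hB10
      rw [Set.indicator_of_notMem hvB]
      have := add_le_add hterm1 hterm2
      calc _ ≤ cB * (KD * Cf) + cB * (B1 * (2*σ + ε₁)) := this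
      _ ≤ _ := by rw [mul_zero]; linarith
  -- main term estimate
  have hmain : ‖(∫ v in (0:ℝ)..G,
        aMul (X (ts (n+m+1)) * (X (ts (n+m) + v))⁻¹) (f (ts (n+m) + v))) -
      ∫ v in (0:ℝ)..G, aMul (X (ts (n+a+1)) * (X (ts (n+a) + v))⁻¹) (f (ts (n+a) + v))‖ ≤
      (cB * (KD * Cf) + cB * (B1 * (2*σ + ε₁))) * θ +
        (cB * (B1 * (2*Cf))) * (((Nw:ℝ)+1) * (20*σ)) := by
    rw [← intervalIntegral.integral_sub (hIm 0 G) (hIa 0 G)]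
    rw [intervalIntegral.integral_of_le hG0.le]
    refine le_trans (norm_integral_le_integral_norm _) ?_
    have hInorm : IntegrableOn (fun v =>
        ‖aMul (X (ts (n+m+1)) * (X (ts (n+m) + v))⁻¹) (f (ts (n+m) + v)) -
          aMul (X (ts (n+a+1)) * (X (ts (n+a) + v))⁻¹) (f (ts (n+a) + v))‖)
        (Set.Ioc 0 G) volume := ((hIm 0 G).sub (hIa 0 G)).1.norm
    have hIoc : volume (Set.Ioc (0:ℝ) G) < ⊤ := measure_Ioc_lt_top
    have hind : Integrable (Bad.indicator (fun _ => (1:ℝ)))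
        (volume.restrict (Set.Ioc 0 G)) := by
      rw [integrable_indicator_iff hBadMeas]
      refine (integrableOn_const_iff enorm_ne_top).mpr (Or.inr ?_)
      rw [Measure.restrict_apply hBadMeas]
      exact lt_of_le_of_lt (measure_mono Set.inter_subset_right) hIoc
    have hIind : IntegrableOn (fun v => (cB * (KD * Cf) + cB * (B1 * (2*σ + ε₁))) +
        (cB * (B1 * (2*Cf))) * Bad.indicator (fun _ => (1:ℝ)) v) (Set.Ioc 0 G) volume :=
      Integrable.add ((integrableOn_const_iff enorm_ne_top).mpr (Or.inr hIoc)) (hind.const_mul _)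
    have hmono := setIntegral_mono_on hInorm hIind measurableSet_Ioc hpt
    refine le_trans hmono ?_
    rw [integral_add ((integrableOn_const_iff (C := cB * (KD * Cf) + cB * (B1 * (2*σ + ε₁)))
      enorm_ne_top).mpr (Or.inr hIoc)) (hind.const_mul _)]
    rw [setIntegral_const]
    rw [integral_const_mul]
    rw [integral_indicator hBadMeas]
    rw [setIntegral_const]
    simp only [smul_eq_mul, mul_one]
    simp only [measureReal_def]
    rw [Measure.restrict_apply hBadMeas]
    have hvol2 : (volume (Bad ∩ Set.Ioc 0 G)).toReal ≤ ((Nw:ℝ)+1) * (20*σ) := by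
      refine ENNReal.toReal_le_of_le_ofReal (by positivity) ?_
      exact le_trans (measure_mono Set.inter_subset_left) hBadVol
    have hvolIoc : (volume (Set.Ioc (0:ℝ) G)).toReal = G := by
      rw [Real.volume_Ioc, ENNReal.toReal_ofReal (by linarith)]
      ring
    rw [hvolIoc]
    have hCG0 : 0 ≤ cB * (KD * Cf) + cB * (B1 * (2*σ + ε₁)) := by positivity
    have hCB0 : 0 ≤ cB * (B1 * (2*Cf)) := by positivity
    refine add_le_add ?_ ?_
    · calc G * (cB * (KD * Cf) + cB * (B1 * (2*σ + ε₁)))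
          = (cB * (KD * Cf) + cB * (B1 * (2*σ + ε₁))) * G := mul_comm _ _
      _ ≤ (cB * (KD * Cf) + cB * (B1 * (2*σ + ε₁))) * θ :=
          mul_le_mul_of_nonneg_left hGθ hCG0
    · exact mul_le_mul_of_nonneg_left hvol2 hCB0
  -- tail estimates
  have htail : ∀ (jj : ℤ) (b : ℝ), ts (jj+1) - ts jj ≤ θ → G ≤ b → b ≤ θ →
      b - G ≤ 4*σ → b = ts (jj+1) - ts jj →
      ‖∫ v in G..b, aMul (X (ts (jj+1)) * (X (ts jj + v))⁻¹) (f (ts jj + v))‖ ≤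
        cB * (B1 * Cf) * (4*σ) := by
    intro jj b hbθ hGb hbθ' hb4 hbeq
    refine le_trans (intervalIntegral.norm_integral_le_of_norm_le_const
      (C := cB * (B1 * Cf)) ?_) ?_
    · intro v hv
      rw [Set.uIoc_of_le hGb] at hv
      refine le_trans (aMul_bound _ _) ?_
      rw [hcBdef]
      refine mul_le_mul_of_nonneg_left ?_ (ContinuousLinearMap.opNorm_nonneg _)
      refine mul_le_mul ?_ (hCf _) (norm_nonneg _) hB10
      rw [hB1def]
      refine norm_K_le' hX hXinv hM ?_
      rw [show ts (jj+1) - (ts jj + v) = (ts (jj+1) - ts jj) - v from by ring, ← hbeq]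
      rw [abs_of_nonneg (by linarith [hv.1, hv.2, hG0])]
      linarith [hv.1, hv.2, hG0]
    · rw [abs_of_nonneg (by linarith)]
      refine mul_le_mul_of_nonneg_left hb4 (by positivity)
  have htailm : ‖∫ v in G..g,
      aMul (X (ts (n+m+1)) * (X (ts (n+m) + v))⁻¹) (f (ts (n+m) + v))‖ ≤
      cB * (B1 * Cf) * (4*σ) := by
    refine htail (n+m) g hgθ (min_le_left _ _) (by rw [hgdef] at hgθ ⊢; exact hgθ) ?_ hgdef
    have h := abs_le.mp hgg'
    rw [hGdef]
    rcases le_total g g' with h1 | h1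
    · rw [min_eq_left h1]; linarith
    · rw [min_eq_right h1]; linarith [h.2]
  have htaila : ‖∫ v in G..g',
      aMul (X (ts (n+a+1)) * (X (ts (n+a) + v))⁻¹) (f (ts (n+a) + v))‖ ≤
      cB * (B1 * Cf) * (4*σ) := by
    refine htail (n+a) g' hg'θ (min_le_right _ _) (by rw [hg'def] at hg'θ ⊢; exact hg'θ) ?_ hg'def
    have h := abs_le.mp hgg'
    rw [hGdef]
    rcases le_total g g' with h1 | h1
    · rw [min_eq_left h1]; linarith [h.1]
    · rw [min_eq_right h1]; linarith
  -- assemble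
  set Im0 := ∫ v in (0:ℝ)..G, aMul (X (ts (n+m+1)) * (X (ts (n+m) + v))⁻¹) (f (ts (n+m) + v))
    with hIm0
  set Ia0 := ∫ v in (0:ℝ)..G, aMul (X (ts (n+a+1)) * (X (ts (n+a) + v))⁻¹) (f (ts (n+a) + v))
    with hIa0
  set Imt := ∫ v in G..g, aMul (X (ts (n+m+1)) * (X (ts (n+m) + v))⁻¹) (f (ts (n+m) + v))
    with hImt
  set Iat := ∫ v in G..g', aMul (X (ts (n+a+1)) * (X (ts (n+a) + v))⁻¹) (f (ts (n+a) + v))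
    with hIat
  have htaila' : ‖-Iat‖ ≤ cB * (B1 * Cf) * (4*σ) := by rw [norm_neg]; exact htaila
  have hsplit2 : Im0 + Imt - (Ia0 + Iat) = (Im0 - Ia0) + (Imt + (- Iat)) := by abel
  rw [hsplit2]
  refine le_trans (norm_add_le _ _) ?_
  refine le_trans (add_le_add hmain (le_trans (norm_add_le _ _)
    (add_le_add htailm htaila'))) ?_
  rw [hKDdef, hB1def]
  rw [hcBdef, hE1def]
  ring_nf
  exact le_refl _


lemma floor_close {x y δ : ℝ} (hδ : 0 < δ) (h : ⌊x/δ⌋ = ⌊y/δ⌋) : |x - y| ≤ δ := by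
  have hx1 := Int.floor_le (x/δ)
  have hx2 := Int.lt_floor_add_one (x/δ)
  have hy1 := Int.floor_le (y/δ)
  have hy2 := Int.lt_floor_add_one (y/δ)
  rw [h] at hx1 hx2
  have h1 : x/δ - y/δ < 1 := by linarith
  have h2 : y/δ - x/δ < 1 := by linarith
  rw [div_sub_div_same] at h1 h2
  have h3 := (div_lt_one hδ).mp h1
  have h4 := (div_lt_one hδ).mp h2
  rw [abs_le]
  constructor <;> linarith


end Pair

/-- if `A` is almost periodic, `(t_n^{(k)})` is equipotentially almost periodic
and `f` is bounded, locally integrable and satisfies `(H3)`, then the sequence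
`h(n) = ∫_{t_n}^{t_{n+1}} X(t_{n+1},u) f(u) du` is an almost periodic sequence. -/
theorem h_is_almost_periodic {q : ℕ} (hq : 1 ≤ q)
    (ts : ℤ → ℝ) (hts : StrictMono ts)
    (htop : Tendsto ts atTop atTop) (hbot : Tendsto ts atBot atBot)
    (hbdd : BddAbove (Set.range fun n : ℤ => ts (n + 1) - ts n))
    (A : ℝ → Mat q) (hA : APR A) (hEqui : EquiAP ts)
    (X : ℝ → Mat q) (hX : ∀ t : ℝ, HasDerivAt X (A t * X t) t)
    (hXinv : ∀ t : ℝ, IsUnit (X t))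
    (f : ℝ → Vec q) (hfbdd : ∃ C : ℝ, ∀ t : ℝ, ‖f t‖ ≤ C)
    (hfloc : LocallyIntegrable f) (hf3 : H3cond ts f) :
    APZ (fun n : ℤ => ∫ u in (ts n)..(ts (n + 1)),
      aMul (X (ts (n + 1)) * (X u)⁻¹) (f u)) := by
  classical
  obtain ⟨M, hM0, hM⟩ := A_bounded hA
  have hAc : Continuous A := hA.1
  obtain ⟨θ, hθub⟩ := hbdd
  have hθ : ∀ n : ℤ, ts (n+1) - ts n ≤ θ := fun n => hθub (Set.mem_range_self n)
  have hθ0 : 0 < θ := lt_of_lt_of_le (sub_pos.mpr (hts (lt_add_one (0:ℤ)))) (hθ 0)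
  obtain ⟨Cf₀, hCf₀⟩ := hfbdd
  set Cf : ℝ := max Cf₀ 0 with hCfdef
  have hCf : ∀ t, ‖f t‖ ≤ Cf := fun t => le_trans (hCf₀ t) (le_max_left _ _)
  have hCf0 : 0 ≤ Cf := le_max_right _ _
  obtain ⟨Nw, hNw⟩ := window_bound hts htop hbot hEqui (θ + 10)
  intro ε hε
  -- the two constants from the pair estimate
  set E1 : ℝ := ‖(1 : Mat q)‖ with hE1def
  have hE10 : (0:ℝ) ≤ E1 := norm_nonneg _
  set cB : ℝ := ‖aMulCLM q‖ with hcBdef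
  have hcB0 : (0:ℝ) ≤ cB := ContinuousLinearMap.opNorm_nonneg _
  set C1 : ℝ := cB * (E1 * Real.exp ((M+1)*(θ+1))) *
      (4*M*(E1 * Real.exp (M+1))*Cf*θ + 2*θ + 2*Cf*((Nw:ℝ)+1)*20 + 8*Cf) with hC1def
  set C2 : ℝ := cB * (Cf*θ*(3*(E1 * Real.exp ((M+1)*θ))*Real.exp ((M+1)*θ)) +
      (E1 * Real.exp ((M+1)*(θ+1)))*θ) with hC2def
  have hexp1 : (0:ℝ) ≤ Real.exp ((M+1)*(θ+1)) := (Real.exp_pos _).le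
  have hexp2 : (0:ℝ) ≤ Real.exp (M+1) := (Real.exp_pos _).le
  have hexp3 : (0:ℝ) ≤ Real.exp ((M+1)*θ) := (Real.exp_pos _).le
  have hNw0 : (0:ℝ) ≤ (Nw:ℝ) := Nat.cast_nonneg _
  have hC10 : 0 ≤ C1 := by
    rw [hC1def]
    have t1 : (0:ℝ) ≤ 4*M*(E1 * Real.exp (M+1))*Cf*θ :=
      mul_nonneg (mul_nonneg (mul_nonneg (by linarith) (mul_nonneg hE10 hexp2)) hCf0) hθ0.le
    have t2 : (0:ℝ) ≤ 2*Cf*((Nw:ℝ)+1)*20 :=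
      mul_nonneg (mul_nonneg (by linarith) (by linarith)) (by norm_num)
    exact mul_nonneg (mul_nonneg hcB0 (mul_nonneg hE10 hexp1)) (by linarith)
  have hC20 : 0 ≤ C2 := by
    rw [hC2def]
    have t1 : (0:ℝ) ≤ Cf*θ*(3*(E1 * Real.exp ((M+1)*θ))*Real.exp ((M+1)*θ)) :=
      mul_nonneg (mul_nonneg hCf0 hθ0.le)
        (mul_nonneg (mul_nonneg (by norm_num) (mul_nonneg hE10 hexp3)) hexp3)
    have t2 : (0:ℝ) ≤ (E1 * Real.exp ((M+1)*(θ+1)))*θ :=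
      mul_nonneg (mul_nonneg hE10 hexp1) hθ0.le
    exact mul_nonneg hcB0 (by linarith)
  set ε₁ : ℝ := ε / (C1 + C2 + 1) with hε₁def
  have hε₁0 : 0 < ε₁ := div_pos hε (by linarith)
  obtain ⟨-, δf, hδf0, hδfprop⟩ := hf3 ε₁ hε₁0
  obtain ⟨δA, hδA0, hδA1, hδAprop⟩ := A_unifCont hA hε₁0
  set σ : ℝ := min (min ε₁ (1/2)) (min (δf/3) δA) with hσdef
  have hσ0 : 0 < σ := by
    rw [hσdef]
    apply lt_min (lt_min hε₁0 (by norm_num)) (lt_min (by linarith) hδA0)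
  have hσε : σ ≤ ε₁ := le_trans (min_le_left _ _) (min_le_left _ _)
  have hσh : σ ≤ 1/2 := le_trans (min_le_left _ _) (min_le_right _ _)
  have hσδf : 3*σ ≤ δf := by
    have h1 : σ ≤ δf/3 :=
      le_trans (min_le_right (min ε₁ (1/2)) (min (δf/3) δA)) (min_le_left (δf/3) δA)
    linarith
  have hσδA : σ ≤ δA := le_trans (min_le_right _ _) (min_le_right _ _)
  -- relatively dense translation sets
  obtain ⟨lt, hlt0, hlt⟩ := hEqui σ hσ0
  obtain ⟨lf, hlf0, hlf⟩ := (hf3 σ hσ0).1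
  obtain ⟨lA, hlA0, hlA⟩ := hA.2 σ hσ0
  -- choice of almost periods attached to every integer
  have hTc : ∀ b : ℤ, ∃ T : ℤ, (∀ k n : ℤ,
      |(ts (T + n + k) - ts (T + n)) - (ts (n + k) - ts n)| ≤ σ) ∧ b - lt ≤ T ∧ T ≤ b := by
    intro b
    obtain ⟨T, hT1, hT2⟩ := hlt (b - lt)
    rw [Set.mem_Icc] at hT2
    exact ⟨T, hT1, hT2.1, by omega⟩
  choose Tm hTm hTm1 hTm2 using hTc
  have hAc2 : ∀ b : ℤ, ∃ τ : ℝ, (∀ t : ℝ, ‖A (t + τ) - A t‖ ≤ σ) ∧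
      ts b - lA ≤ τ ∧ τ ≤ ts b := by
    intro b
    obtain ⟨τ, hτ1, hτ2⟩ := hlA (ts b - lA)
    rw [Set.mem_Icc] at hτ2
    exact ⟨τ, hτ1, hτ2.1, by linarith [hτ2.2]⟩
  choose τA hτA hτA1 hτA2 using hAc2
  have hfc : ∀ b : ℤ, ∃ τ : ℝ, τ ∈ Tset ts f σ ∧ ts b - lf ≤ τ ∧ τ ≤ ts b := by
    intro b
    obtain ⟨τ, hτ1, hτ2⟩ := hlf (ts b - lf)
    rw [Set.mem_Icc] at hτ2
    exact ⟨τ, hτ1, hτ2.1, by linarith [hτ2.2]⟩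
  choose τf hτf hτf1 hτf2 using hfc
  -- classification
  set cl : ℤ → ℤ × ℤ × ℤ := fun b =>
    (b - Tm b, ⌊(ts b - τA b)/δA⌋, ⌊(ts b - τf b)/σ⌋) with hcldef
  set S : Finset (ℤ × ℤ × ℤ) :=
    (Finset.Icc 0 lt) ×ˢ ((Finset.Icc 0 ⌊lA/δA⌋) ×ˢ (Finset.Icc 0 ⌊lf/σ⌋)) with hSdef
  have hclS : ∀ b : ℤ, cl b ∈ S := by
    intro b
    rw [hSdef, hcldef]
    simp only [Finset.mem_product, Finset.mem_Icc]
    refine ⟨⟨by linarith [hTm2 b], by linarith [hTm1 b]⟩, ⟨?_, ?_⟩, ⟨?_, ?_⟩⟩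
    · exact Int.floor_nonneg.mpr (div_nonneg (by linarith [hτA2 b]) hδA0.le)
    · exact Int.floor_le_floor ((div_le_div_iff_of_pos_right hδA0).mpr (by linarith [hτA1 b]))
    · exact Int.floor_nonneg.mpr (div_nonneg (by linarith [hτf2 b]) hσ0.le)
    · exact Int.floor_le_floor ((div_le_div_iff_of_pos_right hσ0).mpr (by linarith [hτf1 b]))
  set rep : ℤ × ℤ × ℤ → ℤ := fun i => if h : ∃ b, cl b = i then h.choose else 0 with hrepdef
  have hrep : ∀ b : ℤ, cl (rep (cl b)) = cl b := by
    intro b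
    have h : ∃ b', cl b' = cl b := ⟨b, rfl⟩
    rw [hrepdef]
    simp only [dif_pos h]
    exact h.choose_spec
  set Lrep : ℕ := S.sup (fun i => (rep i).natAbs) with hLrepdef
  have hLrep : ∀ b : ℤ, (rep (cl b)).natAbs ≤ Lrep := fun b =>
    Finset.le_sup (f := fun i => (rep i).natAbs) (hclS b)
  refine ⟨2*(Lrep:ℤ) + 1, by positivity, ?_⟩
  intro m₀
  set m : ℤ := m₀ + Lrep with hmdef
  set a : ℤ := rep (cl m) with hadef
  have hcleq : cl a = cl m := hrep m
  have haL : a.natAbs ≤ Lrep := hLrep m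
  refine ⟨m - a, ?_, ?_⟩
  swap
  · rw [Set.mem_Icc]
    omega
  -- m - a is an ε-almost period
  intro n
  simp only
  -- same-class data
  have hs_eq : m - Tm m = a - Tm a := by
    have := congrArg (fun p => p.1) hcleq
    simpa [hcldef] using this.symm
  have hA_eq : ⌊(ts m - τA m)/δA⌋ = ⌊(ts a - τA a)/δA⌋ := by
    have := congrArg (fun p => p.2.1) hcleq
    simpa [hcldef] using this.symm
  have hf_eq : ⌊(ts m - τf m)/σ⌋ = ⌊(ts a - τf a)/σ⌋ := by
    have := congrArg (fun p => p.2.2) hcleq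
    simpa [hcldef] using this.symm
  have hpA : |(ts m - τA m) - (ts a - τA a)| ≤ δA := floor_close hδA0 hA_eq
  have hpf : |(ts m - τf m) - (ts a - τf a)| ≤ σ := floor_close hσ0 hf_eq
  -- the φ-comparison
  have hφ1 : ∀ (b k : ℤ),
      |(ts (k + b) - ts b) - (ts (k + (b - Tm b)) - ts (b - Tm b))| ≤ σ := by
    intro b k
    have h := hTm b k (b - Tm b)
    rw [show Tm b + (b - Tm b) + k = k + b from by ring,
      show Tm b + (b - Tm b) = b from by ring,
      show b - Tm b + k = k + (b - Tm b) from by ring] at h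
    exact h
  have hφ : ∀ k : ℤ, |(ts (k + m) - ts m) - (ts (k + a) - ts a)| ≤ 2*σ := by
    intro k
    have h1 := hφ1 m k
    have h2 := hφ1 a k
    rw [← hs_eq] at h2
    have ha1 := abs_le.mp h1
    have ha2 := abs_le.mp h2
    rw [abs_le]
    constructor <;> linarith [ha1.1, ha1.2, ha2.1, ha2.2]
  -- the A-comparison
  have hA3 : ∀ w : ℝ, ‖A (w + ts m) - A (w + ts a)‖ ≤ 3*ε₁ := by
    intro w
    have h1 : ‖A (w + ts m) - A (w + (ts m - τA m))‖ ≤ σ := by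
      have := hτA m (w + (ts m - τA m))
      rw [show (w + (ts m - τA m)) + τA m = w + ts m from by ring] at this
      exact this
    have h2 : ‖A (w + ts a) - A (w + (ts a - τA a))‖ ≤ σ := by
      have := hτA a (w + (ts a - τA a))
      rw [show (w + (ts a - τA a)) + τA a = w + ts a from by ring] at this
      exact this
    have h3 : ‖A (w + (ts m - τA m)) - A (w + (ts a - τA a))‖ ≤ ε₁ := by
      refine hδAprop _ _ ?_
      rw [show (w + (ts m - τA m)) - (w + (ts a - τA a)) =
        (ts m - τA m) - (ts a - τA a) from by ring]
      exact hpA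
    calc ‖A (w + ts m) - A (w + ts a)‖
        = ‖(A (w + ts m) - A (w + (ts m - τA m))) +
            ((A (w + (ts m - τA m)) - A (w + (ts a - τA a))) +
             (A (w + (ts a - τA a)) - A (w + ts a)))‖ := by congr 1; abel
    _ ≤ ‖A (w + ts m) - A (w + (ts m - τA m))‖ +
          (‖A (w + (ts m - τA m)) - A (w + (ts a - τA a))‖ +
           ‖A (w + (ts a - τA a)) - A (w + ts a)‖) :=
        le_trans (norm_add_le _ _) (add_le_add le_rfl (norm_add_le _ _))
    _ ≤ σ + (ε₁ + σ) := by
        refine add_le_add h1 (add_le_add h3 ?_)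
        rw [norm_sub_rev]; exact h2
    _ ≤ 3*ε₁ := by linarith
  -- apply the pair estimate at index n - a
  have hpe := pair_estimate (θ := θ) (Cf := Cf) (σ := σ) (ε₁ := ε₁) (Nw := Nw)
    hts htop hbot hθ hX hXinv hM hAc hCf hCf0 hfloc hσ0 hσh hσε hNw
    (m := m) (a := a) (τ₁ := τf m) (τ₂ := τf a) hφ hA3 (hτf m) (hτf a) hpf
    (fun τ' hτ' => hδfprop τ' (le_trans hτ' hσδf)) (n - a)
  rw [show n - a + m = n + (m - a) from by ring,
    show n - a + a = n from by ring] at hpe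
  refine le_trans hpe ?_
  have hfin : σ * C1 + ε₁ * C2 ≤ ε := by
    have h1 : σ * C1 ≤ ε₁ * C1 := mul_le_mul_of_nonneg_right hσε hC10
    have h2 : ε₁ * (C1 + C2) ≤ ε := by
      rw [hε₁def, div_mul_eq_mul_div, div_le_iff₀ (by linarith : (0:ℝ) < C1 + C2 + 1)]
      nlinarith
    linarith
  rw [hC1def, hC2def, hcBdef, hE1def] at hfin
  exact hfin
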